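/- arXiv:1409.4030 — 6 statements merged into one kernel-verified Lean document; each statement's English description precedes it below -/
import Mathlib

section
/- Let (X̂ₙ)ₙ∈ℕ and (X̃ₙ)ₙ∈ℕ be two sequences of X-valued random variables on a common probability space (Ω, F, P), let f : X → ℝ be a bounded measurable function, let α ∈ [0,1], and let τ : Ω → ℕ be an integrable random variable such that for every n ∈ ℕ, E[(f(X̂ₙ) − f(X̃ₙ)) · 1_{τ < n}] = 0. Then the series ∑ₙ αⁿ E[f(X̂ₙ) − f(X̃ₙ)] converges absolutely and |∑_{n=0}^{∞} αⁿ E[f(X̂ₙ) − f(X̃ₙ)]| ≤ 2 ‖f‖_∞ (E[τ] + 1), where ‖f‖_∞ = sup_x |f(x)|. -/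
open MeasureTheory Filter

/-- Coupling estimate: if two bounded-payoff sequences agree in expectation after an
integrable coupling time `τ`, then the discounted difference series converges absolutely
and is bounded by `2‖f‖_∞ (E[τ] + 1)`. -/
theorem coupling_discounted_bound
    {Ω : Type*} [MeasurableSpace Ω] (P : Measure Ω) [IsProbabilityMeasure P]
    {X : Type*} [MeasurableSpace X]
    (Xhat Xtil : ℕ → Ω → X)
    (hXhat : ∀ n, Measurable (Xhat n)) (hXtil : ∀ n, Measurable (Xtil n))
    (f : X → ℝ) (hf : Measurable f) (C : ℝ) (hfC : ∀ x, |f x| ≤ C)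
    (α : ℝ) (hα0 : 0 ≤ α) (hα1 : α ≤ 1)
    (τ : Ω → ℕ) (hτm : Measurable τ)
    (hτint : Integrable (fun ω => (τ ω : ℝ)) P)
    (hcouple : ∀ n : ℕ,
      ∫ ω, {ω' | τ ω' < n}.indicator (fun ω' => f (Xhat n ω') - f (Xtil n ω')) ω ∂P = 0) :
    Summable (fun n : ℕ => |α ^ n * ∫ ω, (f (Xhat n ω) - f (Xtil n ω)) ∂P|) ∧
      |∑' n : ℕ, α ^ n * ∫ ω, (f (Xhat n ω) - f (Xtil n ω)) ∂P| ≤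
        2 * C * ((∫ ω, (τ ω : ℝ) ∂P) + 1) := by
  obtain ⟨ω0⟩ : Nonempty Ω := by
    by_contra h
    rw [not_nonempty_iff] at h
    have := measure_univ (μ := P)
    simp [Set.univ_eq_empty_iff.mpr h] at this
  have hC0 : 0 ≤ C := le_trans (abs_nonneg _) (hfC (Xhat 0 ω0))
  set g : ℕ → Ω → ℝ := fun n ω => f (Xhat n ω) - f (Xtil n ω) with hg
  have hgmeas : ∀ n, Measurable (g n) := fun n =>
    (hf.comp (hXhat n)).sub (hf.comp (hXtil n))
  have hgbd : ∀ n ω, |g n ω| ≤ 2 * C := by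
    intro n ω
    calc |g n ω| ≤ |f (Xhat n ω)| + |f (Xtil n ω)| := abs_sub _ _
      _ ≤ C + C := add_le_add (hfC _) (hfC _)
      _ = 2 * C := by ring
  have hgint : ∀ n, Integrable (g n) P := fun n =>
    (integrable_const (2 * C)).mono' (hgmeas n).aestronglyMeasurable
      (ae_of_all _ (hgbd n))
  have hIci : ∀ n : ℕ, MeasurableSet {ω | n ≤ τ ω} := fun n => hτm measurableSet_Ici
  -- key bound on each discounted term
  have key : ∀ n, |∫ ω, g n ω ∂P| ≤ 2 * C * (P {ω | n ≤ τ ω}).toReal := by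
    intro n
    have hs : MeasurableSet {ω | τ ω < n} := hτm measurableSet_Iio
    have hsplit : ∫ ω in {ω | τ ω < n}, g n ω ∂P + ∫ ω in {ω | τ ω < n}ᶜ, g n ω ∂P
        = ∫ ω, g n ω ∂P := integral_add_compl hs (hgint n)
    have h1 : ∫ ω in {ω | τ ω < n}, g n ω ∂P = 0 := by
      rw [← integral_indicator hs]; exact hcouple n
    have hcompl : {ω | τ ω < n}ᶜ = {ω | n ≤ τ ω} := by
      ext ω; simp [not_lt]
    rw [← hsplit, h1, zero_add, hcompl]
    have := norm_setIntegral_le_of_norm_le_const (μ := P) (s := {ω | n ≤ τ ω})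
      (C := 2 * C) (f := g n) (measure_lt_top _ _)
      (fun ω _ => by simpa using hgbd n ω)
    simpa [Real.norm_eq_abs, mul_comm, measureReal_def] using this
  -- partial sums of tail probabilities bounded by E τ + 1
  have hindint : ∀ n : ℕ, Integrable ({ω | n ≤ τ ω}.indicator (fun _ => (1 : ℝ))) P :=
    fun n => (integrable_const (1 : ℝ)).indicator (hIci n)
  have hpart : ∀ N, ∑ n ∈ Finset.range N, (P {ω | n ≤ τ ω}).toReal
      ≤ (∫ ω, (τ ω : ℝ) ∂P) + 1 := by
    intro N
    have hb : ∀ ω, ∑ n ∈ Finset.range N, ({ω' | n ≤ τ ω'}.indicator (fun _ => (1 : ℝ)) ω)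
        ≤ (τ ω : ℝ) + 1 := by
      intro ω
      have heq : ∑ n ∈ Finset.range N, ({ω' | n ≤ τ ω'}.indicator (fun _ => (1 : ℝ)) ω)
          = (((Finset.range N).filter (fun n => n ≤ τ ω)).card : ℝ) := by
        rw [Finset.card_filter]
        push_cast
        refine Finset.sum_congr rfl fun n _ => ?_
        simp [Set.indicator_apply, Set.mem_setOf_eq]
      rw [heq]
      have hss : (Finset.range N).filter (fun n => n ≤ τ ω) ⊆ Finset.range (τ ω + 1) := by
        intro n hn
        simp only [Finset.mem_filter, Finset.mem_range] at hn ⊢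
        omega
      have hc := Finset.card_le_card hss
      rw [Finset.card_range] at hc
      exact_mod_cast hc
    calc ∑ n ∈ Finset.range N, (P {ω | n ≤ τ ω}).toReal
        = ∑ n ∈ Finset.range N, ∫ ω, ({ω' | n ≤ τ ω'}.indicator (fun _ => (1 : ℝ)) ω) ∂P := by
          refine Finset.sum_congr rfl fun n _ => ?_
          rw [integral_indicator_const (1 : ℝ) (hIci n)]
          simp [measureReal_def]
      _ = ∫ ω, ∑ n ∈ Finset.range N, ({ω' | n ≤ τ ω'}.indicator (fun _ => (1 : ℝ)) ω) ∂P :=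
          (integral_finset_sum _ fun n _ => hindint n).symm
      _ ≤ ∫ ω, ((τ ω : ℝ) + 1) ∂P :=
          integral_mono (integrable_finset_sum _ fun n _ => hindint n)
            (hτint.add (integrable_const 1)) hb
      _ = (∫ ω, (τ ω : ℝ) ∂P) + 1 := by
          rw [integral_add hτint (integrable_const 1), integral_const]
          simp
  -- comparison
  set b : ℕ → ℝ := fun n => 2 * C * (P {ω | n ≤ τ ω}).toReal with hbdef
  have hb0 : ∀ n, 0 ≤ b n := fun n =>
    mul_nonneg (by linarith) ENNReal.toReal_nonneg
  have hpartb : ∀ N, ∑ n ∈ Finset.range N, b n ≤ 2 * C * ((∫ ω, (τ ω : ℝ) ∂P) + 1) := by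
    intro N
    rw [← Finset.mul_sum]
    exact mul_le_mul_of_nonneg_left (hpart N) (by linarith)
  have hbsum : Summable b :=
    summable_of_sum_range_le hb0 hpartb
  have hab : ∀ n, |α ^ n * ∫ ω, g n ω ∂P| ≤ b n := by
    intro n
    rw [abs_mul]
    have h1 : |α ^ n| ≤ 1 := by
      rw [abs_pow, abs_of_nonneg hα0]
      exact pow_le_one₀ hα0 hα1
    calc |α ^ n| * |∫ ω, g n ω ∂P| ≤ 1 * (2 * C * (P {ω | n ≤ τ ω}).toReal) :=
        mul_le_mul h1 (key n) (abs_nonneg _) zero_le_one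
      _ = b n := by rw [one_mul]
  have hasum : Summable (fun n => |α ^ n * ∫ ω, g n ω ∂P|) :=
    Summable.of_nonneg_of_le (fun n => abs_nonneg _) hab hbsum
  refine ⟨hasum, ?_⟩
  have hnorm : Summable (fun n => ‖α ^ n * ∫ ω, g n ω ∂P‖) := by
    simpa only [Real.norm_eq_abs] using hasum
  have habs := norm_tsum_le_tsum_norm hnorm
  simp only [Real.norm_eq_abs] at habs
  calc |∑' n : ℕ, α ^ n * ∫ ω, g n ω ∂P|
      ≤ ∑' n : ℕ, |α ^ n * ∫ ω, g n ω ∂P| := habs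
    _ ≤ ∑' n : ℕ, b n := Summable.tsum_le_tsum hab hasum hbsum
    _ ≤ 2 * C * ((∫ ω, (τ ω : ℝ) ∂P) + 1) := Summable.tsum_le_of_sum_range_le hbsum hpartb
end

section
/- Let (Ω, F, (Fₙ)ₙ∈ℕ, P) be a filtered probability space, X a measurable space, (Xₙ)ₙ∈ℕ an X-valued (Fₙ)-adapted process, K ⊆ X a measurable set, c ≥ 0 a constant, and let V : X → [0,∞) and h : X → ℝ be measurable with h(x) ≥ 1 for all x. Assume V(Xₙ) is integrable for every n and the drift condition holds: for every n ∈ ℕ, E[V(X_{n+1}) | Fₙ] ≤ V(Xₙ) − h(Xₙ) + c·1_K(Xₙ) almost surely. Let τ_K = inf{n ≥ 0 : Xₙ ∈ K} (with inf ∅ = ∞). Then E[τ_K] ≤ E[V(X₀)]; in particular τ_K is finite almost surely whenever E[V(X₀)] < ∞. -/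
open MeasureTheory Filter
open scoped ENNReal

/-- Foster–Lyapunov hitting-time bound: under the drift condition
`E[V(X_{n+1}) | Fₙ] ≤ V(Xₙ) − h(Xₙ) + c·1_K(Xₙ)` with `h ≥ 1` and `V ≥ 0`,
the hitting time `τ_K = inf {n : Xₙ ∈ K}` (with `inf ∅ = ∞`) satisfies
`E[τ_K] ≤ E[V(X₀)]`; in particular it is a.s. finite. -/
theorem foster_lyapunov_hitting_time_bound
    {Ω : Type*} {m0 : MeasurableSpace Ω} {P : Measure Ω} [IsProbabilityMeasure P]
    (ℱ : Filtration ℕ m0)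
    {S : Type*} [MeasurableSpace S]
    (X : ℕ → Ω → S) (hadapted : ∀ n, Measurable[ℱ n] (X n))
    (K : Set S) (hK : MeasurableSet K) (c : ℝ) (hc : 0 ≤ c)
    (V : S → ℝ) (hV : Measurable V) (hV0 : ∀ s, 0 ≤ V s)
    (h : S → ℝ) (hh : Measurable h) (hh1 : ∀ s, 1 ≤ h s)
    (hint : ∀ n, Integrable (fun ω => V (X n ω)) P)
    (hdrift : ∀ n, P[fun ω => V (X (n + 1) ω) | ℱ n] ≤ᵐ[P]
      fun ω => V (X n ω) - h (X n ω) + c * K.indicator 1 (X n ω)) :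
    (∫⁻ ω, (⨅ (n : ℕ) (_ : X n ω ∈ K), (n : ℝ≥0∞)) ∂P ≤
        ENNReal.ofReal (∫ ω, V (X 0 ω) ∂P)) ∧
      ∀ᵐ ω ∂P, (⨅ (n : ℕ) (_ : X n ω ∈ K), (n : ℝ≥0∞)) < ⊤ := by
  classical
  set τ : Ω → ℝ≥0∞ := fun ω => ⨅ (n : ℕ) (_ : X n ω ∈ K), (n : ℝ≥0∞) with hτdef
  set A : ℕ → Set Ω := fun n => {ω | ∀ k ≤ n, X k ω ∉ K} with hAdef
  -- measurability of X n w.r.t. m0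
  have hXm : ∀ n, Measurable (X n) := fun n => (hadapted n).mono (ℱ.le n) le_rfl
  -- A n is ℱ n measurable
  have hAeq : ∀ n, A n = ⋂ (k : ℕ) (_ : k ≤ n), (X k) ⁻¹' Kᶜ := by
    intro n; ext ω; simp [hAdef]
  have hAmF : ∀ n, MeasurableSet[ℱ n] (A n) := by
    intro n
    rw [hAeq n]
    exact MeasurableSet.iInter fun k => MeasurableSet.iInter fun hk =>
      ((hadapted k).mono (ℱ.mono hk) le_rfl) hK.compl
  have hAm : ∀ n, MeasurableSet (A n) := fun n => ℱ.le n _ (hAmF n)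
  have hAsub : ∀ n, A (n + 1) ⊆ A n := fun n ω hω k hk => hω k (hk.trans n.le_succ)
  -- τ > n iff A n
  have hτset : ∀ n : ℕ, {ω | (n : ℝ≥0∞) < τ ω} = A n := by
    intro n; ext ω
    simp only [Set.mem_setOf_eq, hAdef]
    constructor
    · intro hlt k hk hmem
      have : τ ω ≤ (k : ℝ≥0∞) := iInf₂_le k hmem
      have : (n : ℝ≥0∞) < (k : ℝ≥0∞) := lt_of_lt_of_le hlt this
      exact absurd (Nat.cast_lt.mp this) (not_lt.mpr hk)
    · intro hall
      have h1 : ((n + 1 : ℕ) : ℝ≥0∞) ≤ τ ω := by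
        refine le_iInf fun k => le_iInf fun hk => ?_
        have : n < k := lt_of_not_ge fun hkn => hall k hkn hk
        exact_mod_cast this
      calc (n : ℝ≥0∞) < ((n + 1 : ℕ) : ℝ≥0∞) := by exact_mod_cast Nat.lt_succ_self n
        _ ≤ τ ω := h1
  -- key step inequality
  have step : ∀ n, (∫ ω in A (n + 1), V (X (n + 1) ω) ∂P) + (P (A n)).toReal ≤
      ∫ ω in A n, V (X n ω) ∂P := by
    intro n
    have h1 : ∫ ω in A (n + 1), V (X (n + 1) ω) ∂P ≤ ∫ ω in A n, V (X (n + 1) ω) ∂P :=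
      setIntegral_mono_set (hint (n + 1)).integrableOn
        (Eventually.of_forall fun ω => hV0 _)
        (HasSubset.Subset.eventuallyLE (hAsub n))
    have h2 : ∫ ω in A n, V (X (n + 1) ω) ∂P =
        ∫ ω in A n, (P[fun ω => V (X (n + 1) ω) | ℱ n]) ω ∂P :=
      (setIntegral_condExp (ℱ.le n) (hint (n + 1)) (hAmF n)).symm
    have h3 : ∫ ω in A n, (P[fun ω => V (X (n + 1) ω) | ℱ n]) ω ∂P ≤
        ∫ ω in A n, (V (X n ω) - 1) ∂P := by
      refine integral_mono_ae integrable_condExp.integrableOn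
        (((hint n).sub (integrable_const 1)).integrableOn) ?_
      have hd := ae_restrict_of_ae (s := A n) (hdrift n)
      have hmem := ae_restrict_mem (μ := P) (hAm n)
      filter_upwards [hd, hmem] with ω h₁ h₂
      have hx : X n ω ∉ K := h₂ n le_rfl
      have hzero : K.indicator (1 : S → ℝ) (X n ω) = 0 := Set.indicator_of_notMem hx _
      have := h₁
      rw [hzero] at this
      have hhx := hh1 (X n ω)
      simp only [mul_zero, add_zero] at this
      linarith
    have h4 : ∫ ω in A n, (V (X n ω) - 1) ∂P =
        ∫ ω in A n, V (X n ω) ∂P - (P (A n)).toReal := by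
      rw [integral_sub (hint n).integrableOn (integrable_const 1).integrableOn]
      rw [setIntegral_const]
      simp
      rfl
    linarith
  -- telescoping
  have key' : ∀ N, (∑ k ∈ Finset.range N, (P (A k)).toReal) + ∫ ω in A N, V (X N ω) ∂P ≤
      ∫ ω in A 0, V (X 0 ω) ∂P := by
    intro N
    induction N with
    | zero => simp
    | succ N ih =>
      rw [Finset.sum_range_succ]
      have := step N
      linarith
  have g0le : ∫ ω in A 0, V (X 0 ω) ∂P ≤ ∫ ω, V (X 0 ω) ∂P :=
    setIntegral_le_integral (hint 0) (Eventually.of_forall fun ω => hV0 _)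
  have key : ∀ N, ∑ k ∈ Finset.range N, (P (A k)).toReal ≤ ∫ ω, V (X 0 ω) ∂P := by
    intro N
    have hnn : 0 ≤ ∫ ω in A N, V (X N ω) ∂P :=
      integral_nonneg fun ω => hV0 _
    have := key' N
    linarith
  -- ENNReal version of partial sums
  have keyE : ∀ N, ∑ k ∈ Finset.range N, P (A k) ≤
      ENNReal.ofReal (∫ ω, V (X 0 ω) ∂P) := by
    intro N
    calc ∑ k ∈ Finset.range N, P (A k)
        = ∑ k ∈ Finset.range N, ENNReal.ofReal (P (A k)).toReal := by
          exact Finset.sum_congr rfl fun k _ => (ENNReal.ofReal_toReal (measure_ne_top P _)).symm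
      _ = ENNReal.ofReal (∑ k ∈ Finset.range N, (P (A k)).toReal) :=
          (ENNReal.ofReal_sum_of_nonneg fun _ _ => ENNReal.toReal_nonneg).symm
      _ ≤ ENNReal.ofReal (∫ ω, V (X 0 ω) ∂P) := ENNReal.ofReal_le_ofReal (key N)
  have tsumle : ∑' n, P (A n) ≤ ENNReal.ofReal (∫ ω, V (X 0 ω) ∂P) :=
    Summable.tsum_le_of_sum_range_le ENNReal.summable keyE
  -- pointwise layer-cake identity
  have hpt : ∀ ω, τ ω = ∑' n : ℕ, (A n).indicator (fun _ => (1 : ℝ≥0∞)) ω := by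
    intro ω
    classical
    have hind : ∀ n : ℕ, (A n).indicator (fun _ => (1 : ℝ≥0∞)) ω =
        if (n : ℝ≥0∞) < τ ω then 1 else 0 := by
      intro n
      by_cases hm : ω ∈ A n
      · rw [Set.indicator_of_mem hm, if_pos]
        rw [← hτset n] at hm; exact hm
      · rw [Set.indicator_of_notMem hm, if_neg]
        rw [← hτset n] at hm; exact hm
    simp only [hind]
    by_cases hex : ∃ n, X n ω ∈ K
    · set m := Nat.find hex with hm
      have hτω : τ ω = (m : ℝ≥0∞) := by
        apply le_antisymm
        · exact iInf₂_le m (Nat.find_spec hex)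
        · exact le_iInf fun k => le_iInf fun hk => Nat.cast_le.mpr (Nat.find_min' hex hk)
      rw [hτω]
      have : ∀ n : ℕ, (if (n : ℝ≥0∞) < (m : ℝ≥0∞) then (1:ℝ≥0∞) else 0) =
          if n < m then 1 else 0 := by
        intro n; by_cases hnm : n < m
        · rw [if_pos (Nat.cast_lt.mpr hnm), if_pos hnm]
        · rw [if_neg (fun hc => hnm (Nat.cast_lt.mp hc)), if_neg hnm]
      simp only [this]
      rw [tsum_eq_sum (s := Finset.range m)
        (fun n hn => if_neg (fun hc => hn (Finset.mem_range.mpr hc)))]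
      rw [Finset.sum_congr rfl (fun n hn => if_pos (Finset.mem_range.mp hn))]
      simp
    · have hτω : τ ω = ⊤ :=
        eq_top_iff.mpr (le_iInf fun n => le_iInf fun hn => absurd ⟨n, hn⟩ hex)
      rw [hτω]
      have : ∀ n : ℕ, (if (n : ℝ≥0∞) < ⊤ then (1:ℝ≥0∞) else 0) = 1 := fun n =>
        if_pos (ENNReal.natCast_lt_top n)
      simp only [this]
      exact (ENNReal.tsum_const_eq_top_of_ne_zero one_ne_zero).symm
  -- lintegral computation
  have hlin : ∫⁻ ω, τ ω ∂P = ∑' n, P (A n) := by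
    rw [lintegral_congr hpt,
      lintegral_tsum fun n => (measurable_const.indicator (hAm n)).aemeasurable]
    congr 1
    funext n
    rw [lintegral_indicator (hAm n)]
    simp
  have hbound : ∫⁻ ω, τ ω ∂P ≤ ENNReal.ofReal (∫ ω, V (X 0 ω) ∂P) := by
    rw [hlin]; exact tsumle
  refine ⟨hbound, ?_⟩
  -- measurability of τ
  have hτmeas : Measurable τ := by
    apply Measurable.iInf
    intro n
    have : (fun ω => ⨅ (_ : X n ω ∈ K), (n : ℝ≥0∞)) =
        (X n ⁻¹' K).piecewise (fun _ => (n : ℝ≥0∞)) (fun _ => ⊤) := by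
      funext ω
      by_cases hm : X n ω ∈ K
      · simp [Set.piecewise, hm, iInf_pos hm]
      · simp [Set.piecewise, hm, iInf_neg hm]
    rw [this]
    exact Measurable.piecewise (hXm n hK) measurable_const measurable_const
  exact ae_lt_top hτmeas (lt_of_le_of_lt hbound ENNReal.ofReal_lt_top).ne
end

section
/- Let S be a standard Borel space, κ a Markov kernel from S to S, μ a probability measure on S, and let ℙ be the law on S^ℕ of the time-homogeneous Markov chain with initial distribution μ and transition kernel κ (given by the Ionescu–Tulcea construction), with Xₙ : S^ℕ → S the n-th coordinate map. Let c : S → ℝ be bounded measurable, γ ∈ ℝ, and let W : S → ℝ be a measurable function such that W is integrable with respect to κ(s) for every s ∈ S and W(Xₙ) is ℙ-integrable for every n. Assume the dynamic programming inequality W(s) + γ ≤ c(s) + ∫_S W(s') κ(s)(ds') holds for all s ∈ S, and that E[W(Xₙ)]/n → 0 as n → ∞. Then γ ≤ liminf_{n→∞} (1/n) ∑_{k=0}^{n−1} E[c(X_k)]. -/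
open MeasureTheory ProbabilityTheory Filter

/-- Verification theorem (lower bound): let `Plaw` on `S^ℕ` be the law of the
time-homogeneous Markov chain with initial distribution `μ` and transition kernel `κ`
(characterized by its initial law and the Markov property given by the Ionescu–Tulcea
construction), with coordinate process `Xₙ(ω) = ω n`. If a measurable `W`, integrable
w.r.t. each `κ s` and along the chain, satisfies the dynamic programming inequality
`W(s) + γ ≤ c(s) + ∫ W dκ(s)` for all `s`, with `c` bounded measurable, and
`E[W(Xₙ)]/n → 0`, then `γ ≤ liminfₙ (1/n) ∑_{k<n} E[c(X_k)]`. -/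
theorem verification_lower_bound
    {S : Type*} [MeasurableSpace S] [StandardBorelSpace S]
    (κ : Kernel S S) [IsMarkovKernel κ]
    (μ : Measure S) [IsProbabilityMeasure μ]
    (Plaw : Measure (ℕ → S)) [IsProbabilityMeasure Plaw]
    (hinit : Plaw.map (fun ω => ω 0) = μ)
    (hMarkov : ∀ (n : ℕ) (A : Set S), MeasurableSet A →
      Plaw[fun ω => A.indicator (fun _ => (1 : ℝ)) (ω (n + 1)) |
          MeasurableSpace.comap (fun (ω : ℕ → S) (k : Fin (n + 1)) => ω k) inferInstance]
        =ᵐ[Plaw] fun ω => (κ (ω n) A).toReal)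
    (c : S → ℝ) (hc : Measurable c) (M : ℝ) (hcb : ∀ s, |c s| ≤ M)
    (γ : ℝ) (W : S → ℝ) (hW : Measurable W)
    (hWκ : ∀ s, Integrable W (κ s))
    (hWn : ∀ n : ℕ, Integrable (fun ω => W (ω n)) Plaw)
    (hdp : ∀ s, W s + γ ≤ c s + ∫ s', W s' ∂(κ s))
    (hWlim : Tendsto (fun n : ℕ => (∫ ω, W (ω n) ∂Plaw) / n) atTop (nhds 0)) :
    γ ≤ liminf (fun n : ℕ => (1 / (n : ℝ)) * ∑ k ∈ Finset.range n, ∫ ω, c (ω k) ∂Plaw)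
        atTop := by
  classical
  have hXmeas : ∀ n : ℕ, Measurable fun ω : ℕ → S => ω n := fun n => measurable_pi_apply n
  set ν : ℕ → Measure S := fun n => Plaw.map (fun ω => ω n) with hν
  have hνprob : ∀ n, IsProbabilityMeasure (ν n) := fun n =>
    Measure.isProbabilityMeasure_map (hXmeas n).aemeasurable
  -- the one-step evolution of marginals
  have hstep : ∀ n : ℕ, ν (n + 1) = (ν n ⊗ₘ κ).snd := by
    intro n
    haveI := hνprob n
    ext A hA
    have hcond := hMarkov n A hA
    -- the truncation σ-algebra is a sub-σ-algebra
    have hmle : MeasurableSpace.comap (fun (ω : ℕ → S) (k : Fin (n + 1)) => ω k) inferInstance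
        ≤ (inferInstance : MeasurableSpace (ℕ → S)) := by
      have hmeas : Measurable fun (ω : ℕ → S) (k : Fin (n + 1)) => ω k :=
        measurable_pi_lambda _ fun k => measurable_pi_apply _
      exact hmeas.comap_le
    have hintind : Integrable (fun ω => A.indicator (fun _ => (1 : ℝ)) (ω (n + 1))) Plaw := by
      refine ⟨((measurable_indicator_const_iff (1 : ℝ)).2 hA).comp
        (hXmeas (n + 1)) |>.aestronglyMeasurable, ?_⟩
      refine HasFiniteIntegral.of_bounded (C := 1) (ae_of_all _ fun ω => ?_)
      by_cases h : ω (n + 1) ∈ A <;> simp [Set.indicator_apply, h]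
    -- expectation of the conditional expectation
    have h1 : ∫ ω, (κ (ω n) A).toReal ∂Plaw
        = ∫ ω, A.indicator (fun _ => (1 : ℝ)) (ω (n + 1)) ∂Plaw := by
      rw [← integral_congr_ae hcond]
      exact integral_condExp hmle
    have h2 : ∫ ω, A.indicator (fun _ => (1 : ℝ)) (ω (n + 1)) ∂Plaw
        = (ν (n + 1) A).toReal := by
      have : (fun ω : ℕ → S => A.indicator (fun _ => (1 : ℝ)) (ω (n + 1)))
          = Set.indicator ((fun ω : ℕ → S => ω (n + 1)) ⁻¹' A) (fun _ => (1 : ℝ)) := by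
        ext ω; by_cases h : ω (n + 1) ∈ A <;> simp [Set.indicator_apply, h]
      have hpre := (hXmeas (n + 1)) hA
      have hmap : ν (n + 1) A = Plaw ((fun ω : ℕ → S => ω (n + 1)) ⁻¹' A) :=
        Measure.map_apply (hXmeas (n + 1)) hA
      rw [this, hmap]
      exact integral_indicator_one hpre
    have h3 : ∫ ω, (κ (ω n) A).toReal ∂Plaw = ∫ s, (κ s A).toReal ∂(ν n) := by
      rw [hν, integral_map (hXmeas n).aemeasurable
        ((Kernel.measurable_coe κ hA).ennreal_toReal).aestronglyMeasurable]
    have h4 : ∫ s, (κ s A).toReal ∂(ν n) = ((ν n ⊗ₘ κ).snd A).toReal := by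
      rw [integral_toReal ((Kernel.measurable_coe κ hA).aemeasurable)
        (ae_of_all _ fun s => measure_lt_top _ _)]
      congr 1
      rw [Measure.snd_apply hA, Measure.compProd_apply (measurable_snd hA)]
      rfl
    have hfin1 : ν (n + 1) A ≠ ⊤ := (measure_lt_top _ _).ne
    have hfin2 : (ν n ⊗ₘ κ).snd A ≠ ⊤ := by
      haveI : IsProbabilityMeasure (ν n ⊗ₘ κ) := by infer_instance
      exact (measure_lt_top _ _).ne
    have : (ν (n + 1) A).toReal = ((ν n ⊗ₘ κ).snd A).toReal := by
      rw [← h2, ← h1, h3, h4]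
    exact (ENNReal.toReal_eq_toReal_iff' hfin1 hfin2).1 this
  -- integrability of W with respect to marginals
  have hWν : ∀ n, Integrable W (ν n) := by
    intro n
    rw [hν, integrable_map_measure hW.aestronglyMeasurable (hXmeas n).aemeasurable]
    exact hWn n
  have hWint : ∀ n, ∫ ω, W (ω n) ∂Plaw = ∫ s, W s ∂(ν n) := by
    intro n
    rw [hν, integral_map (hXmeas n).aemeasurable hW.aestronglyMeasurable]
  -- integrability on the product
  have hintprod : ∀ n, Integrable (fun p : S × S => W p.2) (ν n ⊗ₘ κ) := by
    intro n
    haveI := hνprob n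
    have h := hWν (n + 1)
    rw [hstep n, Measure.snd,
      integrable_map_measure hW.aestronglyMeasurable measurable_snd.aemeasurable] at h
    exact h
  -- pushing W one step through the kernel
  have hWpush : ∀ n, ∫ s, W s ∂(ν (n + 1)) = ∫ s, (∫ t, W t ∂(κ s)) ∂(ν n) := by
    intro n
    haveI := hνprob n
    rw [hstep n, Measure.snd, integral_map measurable_snd.aemeasurable hW.aestronglyMeasurable,
      Measure.integral_compProd (hintprod n)]
  -- integrability of the averaged W
  have hWavg : ∀ n, Integrable (fun s => ∫ t, W t ∂(κ s)) (ν n) := by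
    intro n
    haveI := hνprob n
    have h := ((Measure.integrable_compProd_iff
      (hintprod n).aestronglyMeasurable).1 (hintprod n)).2
    have hm : StronglyMeasurable fun s => ∫ t, W t ∂(κ s) := by
      have : StronglyMeasurable (Function.uncurry fun (_ : S) (t : S) => W t) :=
        (hW.comp measurable_snd).stronglyMeasurable
      exact this.integral_kernel_prod_right
    refine h.mono hm.aestronglyMeasurable (ae_of_all _ fun s => ?_)
    simp only [norm_norm]
    calc ‖∫ t, W t ∂(κ s)‖ ≤ ∫ t, ‖W t‖ ∂(κ s) := norm_integral_le_integral_norm _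
    _ ≤ ‖∫ t, ‖W t‖ ∂(κ s)‖ := le_abs_self _
  -- integrability of c
  have hcν : ∀ n, Integrable c (ν n) := by
    intro n
    haveI := hνprob n
    exact ⟨hc.aestronglyMeasurable,
      HasFiniteIntegral.of_bounded (C := M) (ae_of_all _ fun s => by
        simpa [Real.norm_eq_abs] using hcb s)⟩
  have hcint : ∀ n, ∫ ω, c (ω n) ∂Plaw = ∫ s, c s ∂(ν n) := by
    intro n
    rw [hν, integral_map (hXmeas n).aemeasurable hc.aestronglyMeasurable]
  -- the one step inequality
  have key : ∀ n : ℕ, ∫ s, W s ∂(ν n) + γ ≤ (∫ ω, c (ω n) ∂Plaw) + ∫ s, W s ∂(ν (n + 1)) := by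
    intro n
    haveI := hνprob n
    have hmono : ∫ s, (W s + γ) ∂(ν n) ≤ ∫ s, (c s + ∫ t, W t ∂(κ s)) ∂(ν n) :=
      integral_mono ((hWν n).add (integrable_const γ)) ((hcν n).add (hWavg n)) hdp
    rw [integral_add (hWν n) (integrable_const γ), integral_add (hcν n) (hWavg n),
      integral_const] at hmono
    simp only [measure_univ, probReal_univ, ENNReal.toReal_one, smul_eq_mul, one_mul] at hmono
    rw [← hcint n, ← hWpush n] at hmono
    exact hmono
  -- telescoping
  have tel : ∀ n : ℕ, ∫ s, W s ∂(ν 0) + n * γ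
      ≤ (∑ k ∈ Finset.range n, ∫ ω, c (ω k) ∂Plaw) + ∫ s, W s ∂(ν n) := by
    intro n
    induction n with
    | zero => simp
    | succ n ih =>
      have := key n
      push_cast
      calc ∫ s, W s ∂(ν 0) + (n + 1) * γ
          = (∫ s, W s ∂(ν 0) + n * γ) + γ := by ring
        _ ≤ ((∑ k ∈ Finset.range n, ∫ ω, c (ω k) ∂Plaw) + ∫ s, W s ∂(ν n)) + γ := by linarith
        _ ≤ (∑ k ∈ Finset.range n, ∫ ω, c (ω k) ∂Plaw)
            + ((∫ ω, c (ω n) ∂Plaw) + ∫ s, W s ∂(ν (n + 1))) := by linarith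
        _ = (∑ k ∈ Finset.range (n + 1), ∫ ω, c (ω k) ∂Plaw) + ∫ s, W s ∂(ν (n + 1)) := by
            rw [Finset.sum_range_succ]; ring
  -- pass to the liminf
  set b : ℕ → ℝ := fun n => (1 / (n : ℝ)) * ∑ k ∈ Finset.range n, ∫ ω, c (ω k) ∂Plaw with hb
  set e : ℕ → ℝ := fun n => (∫ ω, W (ω n) ∂Plaw) / n - (∫ ω, W (ω 0) ∂Plaw) / n with he
  have hge : ∀ n : ℕ, 1 ≤ n → γ - e n ≤ b n := by
    intro n hn
    have hnpos : (0 : ℝ) < n := by exact_mod_cast hn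
    have htel := tel n
    rw [← hWint 0, ← hWint n] at htel
    have h3 : γ ≤ ((∑ k ∈ Finset.range n, ∫ ω, c (ω k) ∂Plaw)
        + ∫ ω, W (ω n) ∂Plaw - ∫ ω, W (ω 0) ∂Plaw) / n := by
      rw [le_div_iff₀ hnpos]
      linarith
    have hbe : b n + e n = ((∑ k ∈ Finset.range n, ∫ ω, c (ω k) ∂Plaw)
        + ∫ ω, W (ω n) ∂Plaw - ∫ ω, W (ω 0) ∂Plaw) / n := by
      simp only [hb, he]
      field_simp
      ring
    rw [← hbe] at h3
    linarith
  have hetends : Tendsto (fun n : ℕ => γ - e n) atTop (nhds γ) := by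
    have h1 : Tendsto (fun n : ℕ => (∫ ω, W (ω 0) ∂Plaw) / n) atTop (nhds 0) :=
      tendsto_const_nhds.div_atTop tendsto_natCast_atTop_atTop
    have h2 : Tendsto e atTop (nhds 0) := by
      simpa using hWlim.sub h1
    simpa using tendsto_const_nhds.sub h2
  -- bounds on b for the liminf comparison
  set M' : ℝ := max M 0 with hM'
  have hbbound : ∀ n : ℕ, b n ≤ M' := by
    intro n
    rcases Nat.eq_zero_or_pos n with h0 | hpos
    · simp [hb, h0, hM']
    have hnpos : (0 : ℝ) < n := by exact_mod_cast hpos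
    have hsum : ∑ k ∈ Finset.range n, ∫ ω, c (ω k) ∂Plaw ≤ n * M' := by
      calc ∑ k ∈ Finset.range n, ∫ ω, c (ω k) ∂Plaw
          ≤ ∑ k ∈ Finset.range n, M' := by
            refine Finset.sum_le_sum fun k _ => ?_
            haveI := hνprob k
            rw [hcint k]
            calc ∫ s, c s ∂(ν k) ≤ ∫ s, M ∂(ν k) :=
              integral_mono (hcν k) (integrable_const M) fun s => le_of_abs_le (hcb s)
            _ = M := by simp
            _ ≤ M' := le_max_left _ _
        _ = n * M' := by simp [mul_comm]
    rw [hb]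
    calc (1 / (n : ℝ)) * ∑ k ∈ Finset.range n, ∫ ω, c (ω k) ∂Plaw
        ≤ (1 / (n : ℝ)) * (n * M') := by
          exact mul_le_mul_of_nonneg_left hsum (by positivity)
      _ = M' := by field_simp
  have hliminf : liminf (fun n : ℕ => γ - e n) atTop ≤ liminf b atTop := by
    refine liminf_le_liminf (Filter.eventually_atTop.2 ⟨1, fun n hn => hge n hn⟩) ?_ ?_
    · exact hetends.isBoundedUnder_ge
    · exact Filter.IsBoundedUnder.isCoboundedUnder_ge
        (isBoundedUnder_of ⟨M', fun n => hbbound n⟩)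
  rw [hetends.liminf_eq] at hliminf
  exact hliminf
end

section
/- Let S be a standard Borel space, κ a Markov kernel from S to S, μ a probability measure on S, and let ℙ be the law on S^ℕ of the time-homogeneous Markov chain with initial distribution μ and transition kernel κ (given by the Ionescu–Tulcea construction), with Xₙ : S^ℕ → S the n-th coordinate map. Let c : S → ℝ be bounded measurable, γ ∈ ℝ, and let W : S → ℝ be a measurable function such that W is integrable with respect to κ(s) for every s ∈ S and W(Xₙ) is ℙ-integrable for every n. Assume the dynamic programming inequality W(s) + γ ≥ c(s) + ∫_S W(s') κ(s)(ds') holds for all s ∈ S, and that E[W(Xₙ)]/n → 0 as n → ∞. Then limsup_{n→∞} (1/n) ∑_{k=0}^{n−1} E[c(X_k)] ≤ γ. -/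
open MeasureTheory ProbabilityTheory Filter

/-- Verification theorem (upper bound): let `Plaw` on `S^ℕ` be the law of the
time-homogeneous Markov chain with initial distribution `μ` and transition kernel `κ`
(characterized by its initial law and the Markov property given by the Ionescu–Tulcea
construction), with coordinate process `Xₙ(ω) = ω n`. If a measurable `W`, integrable
w.r.t. each `κ s` and along the chain, satisfies the dynamic programming inequality
`W(s) + γ ≥ c(s) + ∫ W dκ(s)` for all `s`, with `c` bounded measurable, and
`E[W(Xₙ)]/n → 0`, then `limsupₙ (1/n) ∑_{k<n} E[c(X_k)] ≤ γ`. -/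
theorem verification_upper_bound
    {S : Type*} [MeasurableSpace S] [StandardBorelSpace S]
    (κ : Kernel S S) [IsMarkovKernel κ]
    (μ : Measure S) [IsProbabilityMeasure μ]
    (Plaw : Measure (ℕ → S)) [IsProbabilityMeasure Plaw]
    (hinit : Plaw.map (fun ω => ω 0) = μ)
    (hMarkov : ∀ (n : ℕ) (A : Set S), MeasurableSet A →
      Plaw[fun ω => A.indicator (fun _ => (1 : ℝ)) (ω (n + 1)) |
          MeasurableSpace.comap (fun (ω : ℕ → S) (k : Fin (n + 1)) => ω k) inferInstance]
        =ᵐ[Plaw] fun ω => (κ (ω n) A).toReal)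
    (c : S → ℝ) (hc : Measurable c) (M : ℝ) (hcb : ∀ s, |c s| ≤ M)
    (γ : ℝ) (W : S → ℝ) (hW : Measurable W)
    (hWκ : ∀ s, Integrable W (κ s))
    (hWn : ∀ n : ℕ, Integrable (fun ω => W (ω n)) Plaw)
    (hdp : ∀ s, c s + ∫ s', W s' ∂(κ s) ≤ W s + γ)
    (hWlim : Tendsto (fun n : ℕ => (∫ ω, W (ω n) ∂Plaw) / n) atTop (nhds 0)) :
    limsup (fun n : ℕ => (1 / (n : ℝ)) * ∑ k ∈ Finset.range n, ∫ ω, c (ω k) ∂Plaw)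
        atTop ≤ γ := by
  classical
  have measX : ∀ k : ℕ, Measurable fun ω : ℕ → S => ω k := fun k => measurable_pi_apply k
  set a : ℕ → ℝ := fun n => ∫ ω, W (ω n) ∂Plaw with ha
  set b : ℕ → ℝ := fun n => ∫ ω, c (ω n) ∂Plaw with hb
  haveI hmapprob : ∀ n : ℕ, IsProbabilityMeasure (Plaw.map (fun ω => ω n)) :=
    fun n => Measure.isProbabilityMeasure_map (measX n).aemeasurable
  -- Step 1: law of X_{n+1} equals snd-marginal of (law of X_n) ⊗ₘ κ
  have hmeasEq : ∀ n : ℕ, Plaw.map (fun ω => ω (n + 1)) =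
      ((Plaw.map (fun ω => ω n)) ⊗ₘ κ).map Prod.snd := by
    intro n
    haveI := hmapprob n
    have hmeasp : Measurable (fun (ω : ℕ → S) (k : Fin (n + 1)) => ω (k : ℕ)) :=
      measurable_pi_lambda _ fun k => measX (k : ℕ)
    have hm : MeasurableSpace.comap (fun (ω : ℕ → S) (k : Fin (n + 1)) => ω k) inferInstance ≤
        (inferInstance : MeasurableSpace (ℕ → S)) := hmeasp.comap_le
    ext A hA
    have hκA : Measurable fun s => κ s A := Kernel.measurable_coe κ hA
    have hind : Integrable (fun ω : ℕ → S => A.indicator (fun _ => (1 : ℝ)) (ω (n + 1))) Plaw := by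
      have heq : (fun ω : ℕ → S => A.indicator (fun _ => (1 : ℝ)) (ω (n + 1))) =
          Set.indicator ((fun ω : ℕ → S => ω (n + 1)) ⁻¹' A) (fun _ => 1) := by
        funext ω; simp [Set.indicator_apply, Set.mem_preimage]
      rw [heq]
      exact (integrable_const (1 : ℝ)).indicator ((measX (n + 1)) hA)
    have h1 : ∫ ω, (κ (ω n) A).toReal ∂Plaw
        = ∫ ω, A.indicator (fun _ => (1 : ℝ)) (ω (n + 1)) ∂Plaw := by
      rw [← integral_condExp (μ := Plaw)
        (f := fun ω => A.indicator (fun _ => (1 : ℝ)) (ω (n + 1))) hm]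
      exact integral_congr_ae (hMarkov n A hA).symm
    have h2 : ∫ ω, A.indicator (fun _ => (1 : ℝ)) (ω (n + 1)) ∂Plaw
        = ((Plaw.map (fun ω => ω (n + 1))) A).toReal := by
      have heq : (fun ω : ℕ → S => A.indicator (fun _ => (1 : ℝ)) (ω (n + 1))) =
          ((fun ω : ℕ → S => ω (n + 1)) ⁻¹' A).indicator (1 : (ℕ → S) → ℝ) := by
        funext ω; simp [Set.indicator_apply, Set.mem_preimage]
      rw [heq, integral_indicator_one ((measX (n + 1)) hA),
        Measure.map_apply (measX (n + 1)) hA]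
      rfl
    have h3 : ∫ ω, (κ (ω n) A).toReal ∂Plaw
        = ((((Plaw.map (fun ω => ω n)) ⊗ₘ κ).map Prod.snd) A).toReal := by
      have haem : AEMeasurable (fun ω : ℕ → S => κ (ω n) A) Plaw :=
        ((hκA.comp (measX n)).aemeasurable : _)
      rw [integral_toReal haem (ae_of_all _ fun ω => measure_lt_top _ _)]
      congr 1
      rw [Measure.map_apply measurable_snd hA,
        Measure.compProd_apply (measurable_snd hA)]
      rw [← lintegral_map hκA (measX n)]
      rfl
    have := h2 ▸ h3 ▸ h1
    exact (ENNReal.toReal_eq_toReal_iff' (measure_ne_top _ _) (measure_ne_top _ _)).mp this.symm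
  -- Step 2: integrability and identity for ∫ W dκ(X_n)
  have hWstep : ∀ n : ℕ, Integrable (fun ω => ∫ s', W s' ∂(κ (ω n))) Plaw ∧
      a (n + 1) = ∫ ω, ∫ s', W s' ∂(κ (ω n)) ∂Plaw := by
    intro n
    haveI := hmapprob n
    set ν := Plaw.map (fun ω => ω n) with hν
    have hsm : StronglyMeasurable fun s => ∫ s', W s' ∂(κ s) := by
      have : StronglyMeasurable (Function.uncurry fun (_ : S) (y : S) => W y) :=
        (hW.comp measurable_snd).stronglyMeasurable
      exact this.integral_kernel_prod_right
    have hWmap : Integrable W (Plaw.map (fun ω => ω (n + 1))) :=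
      (integrable_map_measure hW.aestronglyMeasurable
        (measX (n + 1)).aemeasurable).mpr (hWn (n + 1))
    have hWsnd : Integrable (fun p : S × S => W p.2) (ν ⊗ₘ κ) := by
      rw [hmeasEq n] at hWmap
      exact (integrable_map_measure hW.aestronglyMeasurable
        measurable_snd.aemeasurable).mp hWmap
    have hintν : Integrable (fun s => ∫ s', W s' ∂(κ s)) ν := by
      have h := (Measure.integrable_compProd_iff
        ((hW.comp measurable_snd).aestronglyMeasurable)).mp hWsnd
      refine h.2.mono' hsm.aestronglyMeasurable (ae_of_all _ fun s => ?_)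
      simpa using norm_integral_le_integral_norm (μ := κ s) W
    constructor
    · exact (integrable_map_measure hsm.aestronglyMeasurable
        (measX n).aemeasurable).mp hintν
    · calc a (n + 1) = ∫ s', W s' ∂(Plaw.map (fun ω => ω (n + 1))) :=
            (integral_map (measX (n + 1)).aemeasurable hW.aestronglyMeasurable).symm
        _ = ∫ s', W s' ∂((ν ⊗ₘ κ).map Prod.snd) := by rw [hmeasEq n]
        _ = ∫ p, W p.2 ∂(ν ⊗ₘ κ) :=
            integral_map measurable_snd.aemeasurable hW.aestronglyMeasurable
        _ = ∫ s, ∫ s', W s' ∂(κ s) ∂ν := Measure.integral_compProd hWsnd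
        _ = ∫ ω, ∫ s', W s' ∂(κ (ω n)) ∂Plaw :=
            integral_map (measX n).aemeasurable hsm.aestronglyMeasurable
  -- c is integrable along the chain
  have hcint : ∀ n : ℕ, Integrable (fun ω => c (ω n)) Plaw := by
    intro n
    refine Integrable.mono' (integrable_const M)
      ((hc.comp (measX n)).aestronglyMeasurable) (ae_of_all _ fun ω => ?_)
    simpa using hcb (ω n)
  -- Step 3: one-step inequality
  have hstep : ∀ n : ℕ, b n + a (n + 1) ≤ a n + γ := by
    intro n
    obtain ⟨hint, heq⟩ := hWstep n
    calc b n + a (n + 1) = ∫ ω, (c (ω n) + ∫ s', W s' ∂(κ (ω n))) ∂Plaw := by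
          rw [heq, ← integral_add (hcint n) hint]
      _ ≤ ∫ ω, (W (ω n) + γ) ∂Plaw :=
          integral_mono ((hcint n).add hint) ((hWn n).add (integrable_const γ))
            (fun ω => hdp (ω n))
      _ = a n + γ := by
          rw [integral_add (hWn n) (integrable_const γ), integral_const]
          simp
          rfl
  -- Step 4: telescoping
  have htel : ∀ n : ℕ, ∑ k ∈ Finset.range n, b k ≤ a 0 - a n + n * γ := by
    intro n
    induction n with
    | zero => simp
    | succ n ih =>
      rw [Finset.sum_range_succ]
      have := hstep n
      push_cast
      linarith
  -- bounds on b
  have hbM : ∀ n : ℕ, |b n| ≤ M := by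
    intro n
    have h1 : ‖∫ ω, c (ω n) ∂Plaw‖ ≤ ∫ ω, ‖c (ω n)‖ ∂Plaw := norm_integral_le_integral_norm _
    have h2 : ∫ ω, ‖c (ω n)‖ ∂Plaw ≤ ∫ _ : ℕ → S, M ∂Plaw :=
      integral_mono (hcint n).norm (integrable_const M) (fun ω => by simpa using hcb (ω n))
    rw [integral_const] at h2
    simp only [probReal_univ, ENNReal.toReal_one, smul_eq_mul, one_mul] at h2
    calc |b n| = ‖∫ ω, c (ω n) ∂Plaw‖ := rfl
      _ ≤ M := h1.trans h2
  -- Step 5: limit argument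
  set f : ℕ → ℝ := fun n => (1 / (n : ℝ)) * ∑ k ∈ Finset.range n, b k with hf
  set g : ℕ → ℝ := fun n => a 0 / n - a n / n + γ with hg
  have hfg : ∀ᶠ n in atTop, f n ≤ g n := by
    filter_upwards [eventually_ge_atTop 1] with n hn
    have hn0 : (0 : ℝ) < n := by exact_mod_cast hn
    have := htel n
    have h1 : f n ≤ (1 / (n : ℝ)) * (a 0 - a n + n * γ) := by
      apply mul_le_mul_of_nonneg_left this (by positivity)
    calc f n ≤ (1 / (n : ℝ)) * (a 0 - a n + n * γ) := h1
      _ = g n := by rw [hg]; field_simp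
  have hgγ : Tendsto g atTop (nhds γ) := by
    have h1 : Tendsto (fun n : ℕ => a 0 / n) atTop (nhds 0) :=
      tendsto_const_div_atTop_nhds_zero_nat _
    have h2 : Tendsto (fun n : ℕ => a n / n) atTop (nhds 0) := hWlim
    have h3 : Tendsto (fun n : ℕ => (a 0 / n - a n / n) + γ) atTop (nhds ((0 - 0) + γ)) :=
      Tendsto.add (h1.sub h2) tendsto_const_nhds
    simpa using h3
  have hgb : IsBoundedUnder (· ≤ ·) atTop g := hgγ.isBoundedUnder_le
  have hM0 : 0 ≤ M := (abs_nonneg _).trans (hbM 0)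
  have hfb : IsCoboundedUnder (· ≤ ·) atTop f := by
    refine isCoboundedUnder_le_of_le atTop (x := -M) fun n => ?_
    rcases Nat.eq_zero_or_pos n with rfl | hn
    · simp [hf]; linarith
    have hn0 : (0 : ℝ) < n := by exact_mod_cast hn
    have hsum : (-(M * n)) ≤ ∑ k ∈ Finset.range n, b k := by
      have hk : ∀ k ∈ Finset.range n, -M ≤ b k := fun k _ => neg_le_of_abs_le (hbM k)
      calc (-(M * n)) = ∑ _k ∈ Finset.range n, (-M) := by
            simp [Finset.sum_const, mul_comm]
        _ ≤ ∑ k ∈ Finset.range n, b k := Finset.sum_le_sum hk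
    have h4 := mul_le_mul_of_nonneg_left hsum (le_of_lt (by positivity : (0:ℝ) < 1 / n))
    calc (-M : ℝ) = (1 / (n : ℝ)) * (-(M * n)) := by field_simp
      _ ≤ f n := h4
  calc limsup f atTop ≤ limsup g atTop := limsup_le_limsup hfg hfb hgb
    _ = γ := hgγ.limsup_eq
end

section
/- Let A and B be nonempty compact metric spaces, let (Fₙ)ₙ∈ℕ be a sequence of continuous functions Fₙ : A × B → ℝ that is uniformly bounded, and let F : A × B → ℝ be a function such that for every b ∈ B, every a ∈ A and every sequence (aₙ) in A with aₙ → a, limsup_{n→∞} Fₙ(aₙ, b) ≤ F(a, b). Then limsup_{n→∞} sup_{a∈A} inf_{b∈B} Fₙ(a, b) ≤ sup_{a∈A} inf_{b∈B} F(a, b). -/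
open Filter

/-- Abstract limsup interchange for max–min values: if `(Fₙ)` is a uniformly bounded
sequence of continuous functions on the product of nonempty compact metric spaces
`A × B` such that `limsupₙ Fₙ(aₙ, b) ≤ F(a, b)` whenever `aₙ → a`, then
`limsupₙ sup_a inf_b Fₙ(a,b) ≤ sup_a inf_b F(a,b)`. -/
theorem limsup_supInf_le_supInf
    {A B : Type*} [MetricSpace A] [CompactSpace A] [Nonempty A]
    [MetricSpace B] [CompactSpace B] [Nonempty B]
    (F : ℕ → A × B → ℝ) (hFc : ∀ n, Continuous (F n))
    (M : ℝ) (hFb : ∀ n p, |F n p| ≤ M)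
    (G : A × B → ℝ)
    (hlim : ∀ (b : B) (a : A) (as : ℕ → A), Tendsto as atTop (nhds a) →
      limsup (fun n => F n (as n, b)) atTop ≤ G (a, b)) :
    limsup (fun n => ⨆ a : A, ⨅ b : B, (F n (a, b) : EReal)) atTop ≤
      ⨆ a : A, ⨅ b : B, (G (a, b) : EReal) := by
  classical
  have hlow : ∀ n p, -M ≤ F n p := fun n p => (abs_le.mp (hFb n p)).1
  have hup : ∀ n p, F n p ≤ M := fun n p => (abs_le.mp (hFb n p)).2
  set g : ℕ → A → ℝ := fun n a => ⨅ b : B, F n (a, b) with hg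
  have hbdd : ∀ n a, BddBelow (Set.range fun b : B => F n (a, b)) := fun n a =>
    ⟨-M, by rintro x ⟨b, rfl⟩; exact hlow n (a, b)⟩
  have hgle : ∀ n a b, g n a ≤ F n (a, b) := fun n a b => ciInf_le (hbdd n a) b
  have hgge : ∀ n a, -M ≤ g n a := fun n a => le_ciInf fun b => hlow n (a, b)
  have hgleM : ∀ n a, g n a ≤ M := fun n a =>
    (hgle n a (Classical.arbitrary B)).trans (hup n _)
  -- the infimum is attained, hence the coercion commutes with the infimum
  have hcoeInf : ∀ n a, (⨅ b : B, (F n (a, b) : EReal)) = ((g n a : ℝ) : EReal) := by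
    intro n a
    obtain ⟨b0, -, hb0⟩ := isCompact_univ.exists_isMinOn Set.univ_nonempty
      ((hFc n).comp (Continuous.prodMk_right a)).continuousOn
    have hgeq : g n a = F n (a, b0) :=
      le_antisymm (hgle n a b0) (le_ciInf fun b => hb0 (Set.mem_univ b))
    refine le_antisymm ?_ (le_iInf fun b => by exact_mod_cast hgle n a b)
    exact iInf_le_of_le b0 (by rw [hgeq])
  set s' : ℕ → ℝ := fun n => ⨆ a : A, g n a with hs'
  have hbddg : ∀ n, BddAbove (Set.range (g n)) := fun n =>
    ⟨M, by rintro x ⟨a, rfl⟩; exact hgleM n a⟩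
  have hs'leM : ∀ n, s' n ≤ M := fun n => ciSup_le fun a => hgleM n a
  have hs'ge : ∀ n, -M ≤ s' n :=
    fun n => le_trans (hgge n (Classical.arbitrary A)) (le_ciSup (hbddg n) _)
  -- the EReal sup-inf is bounded by `s'`
  have hsle : ∀ n, (⨆ a : A, ⨅ b : B, (F n (a, b) : EReal)) ≤ ((s' n : ℝ) : EReal) := by
    intro n
    refine iSup_le fun a => ?_
    rw [hcoeInf n a]
    exact_mod_cast le_ciSup (hbddg n) a
  -- near-maximizers
  have haseq : ∀ n, ∃ a : A, s' n - 1 / (n + 1) < g n a := by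
    intro n
    have h1 : s' n - 1 / (n + 1) < s' n := by
      have : (0 : ℝ) < 1 / (n + 1) := by positivity
      linarith
    obtain ⟨x, ⟨a, rfl⟩, hx⟩ := exists_lt_of_lt_csSup (Set.range_nonempty (g n)) h1
    exact ⟨a, hx⟩
  choose aseq haseq' using haseq
  set ℓ : ℝ := limsup s' atTop with hℓ
  have hs'bddAbove : IsBoundedUnder (· ≤ ·) atTop s' := isBoundedUnder_of ⟨M, hs'leM⟩
  have hs'bddBelow : IsBoundedUnder (· ≥ ·) atTop s' := isBoundedUnder_of ⟨-M, hs'ge⟩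
  -- extract a subsequence along which `s'` is close to its limsup
  have hfreq : ∀ k : ℕ, ∃ᶠ n in atTop, ℓ - 1 / (k + 1) < s' n := by
    intro k
    refine frequently_lt_of_lt_limsup hs'bddBelow.isCoboundedUnder_flip ?_
    have : (0 : ℝ) < 1 / (k + 1) := by positivity
    linarith [hℓ ▸ (le_refl ℓ)]
  obtain ⟨φ, hφmono, hφ⟩ := extraction_forall_of_frequently hfreq
  -- extract a convergent subsequence of the near-maximizers
  obtain ⟨astar, ψ, hψmono, hψtend⟩ := CompactSpace.tendsto_subseq (fun k => aseq (φ k))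
  set ρ : ℕ → ℕ := φ ∘ ψ with hρdef
  have hρmono : StrictMono ρ := hφmono.comp hψmono
  -- the merged sequence
  set as : ℕ → A := fun n => if h : ∃ j, ρ j = n then aseq n else astar with has
  have has_eq : ∀ j, as (ρ j) = aseq (ρ j) := fun j => dif_pos ⟨j, rfl⟩
  have htend : Tendsto as atTop (nhds astar) := by
    rw [Metric.tendsto_atTop]
    intro ε hε
    have hsub : Tendsto (fun j => aseq (ρ j)) atTop (nhds astar) := hψtend
    obtain ⟨J, hJ⟩ := (Metric.tendsto_atTop.mp hsub) ε hε
    refine ⟨ρ J, fun n hn => ?_⟩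
    by_cases h : ∃ j, ρ j = n
    · obtain ⟨j, rfl⟩ := h
      have hjJ : J ≤ j := hρmono.le_iff_le.mp hn
      simpa [has_eq j] using hJ j hjJ
    · simp only [has, dif_neg h]
      simpa using hε
  -- key estimate: ℓ ≤ G (astar, b) for every b
  have hkey : ∀ b : B, ℓ ≤ G (astar, b) := by
    intro b
    set v : ℕ → ℝ := fun n => F n (as n, b) with hv
    have hvbddAbove : IsBoundedUnder (· ≤ ·) atTop v := isBoundedUnder_of ⟨M, fun n => hup n _⟩
    have hlimv : limsup v atTop ≤ G (astar, b) := hlim b astar as htend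
    set u : ℕ → ℝ := fun j => v (ρ j) with hu
    have hubddAbove : IsBoundedUnder (· ≤ ·) atTop u := isBoundedUnder_of ⟨M, fun n => hup _ _⟩
    have hubddBelow : IsBoundedUnder (· ≥ ·) atTop u := isBoundedUnder_of ⟨-M, fun n => hlow _ _⟩
    -- limsup along the subsequence is at most limsup along the full sequence
    have hsub : limsup u atTop ≤ limsup v atTop := by
      have hmap : map ρ atTop ≤ atTop := hρmono.tendsto_atTop
      have : limsup v (map ρ atTop) ≤ limsup v atTop :=
        limsup_le_limsup_of_le hmap
          (hubddBelow.isCoboundedUnder_flip) hvbddAbove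
      simp only [Filter.limsup, Filter.map_map] at this; exact this
    -- lower bound for u
    have hulb : ∀ j, ℓ - 2 / (j + 1) ≤ u j := by
      intro j
      have h1 : ℓ - 1 / (ψ j + 1) < s' (ρ j) := hφ (ψ j)
      have h2 : s' (ρ j) - 1 / (ρ j + 1) < g (ρ j) (aseq (ρ j)) := haseq' (ρ j)
      have h3 : g (ρ j) (aseq (ρ j)) ≤ F (ρ j) (aseq (ρ j), b) := hgle _ _ _
      have h4 : u j = F (ρ j) (aseq (ρ j), b) := by simp only [hu, hv, has_eq j]
      have hψj : (j : ℝ) ≤ ψ j := by exact_mod_cast hψmono.le_apply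
      have hρj : (j : ℝ) ≤ ρ j := by exact_mod_cast hρmono.le_apply
      have hj1 : (0 : ℝ) < j + 1 := by positivity
      have h5 : 1 / ((ψ j : ℝ) + 1) ≤ 1 / (j + 1) := by
        apply one_div_le_one_div_of_le hj1; linarith
      have h6 : 1 / ((ρ j : ℝ) + 1) ≤ 1 / (j + 1) := by
        apply one_div_le_one_div_of_le hj1; linarith
      have : ℓ - 1 / (ψ j + 1) - 1 / (ρ j + 1) < u j := by rw [h4]; linarith
      have h7 : (2 : ℝ) / (j + 1) = 1 / (j + 1) + 1 / (j + 1) := by ring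
      linarith
    -- hence ℓ ≤ liminf u ≤ limsup u
    have hw : Tendsto (fun j : ℕ => ℓ - 2 / (j + 1)) atTop (nhds ℓ) := by
      have h0 : Tendsto (fun j : ℕ => 2 / ((j : ℝ) + 1)) atTop (nhds 0) := by
        apply Tendsto.div_atTop tendsto_const_nhds
        exact tendsto_atTop_add_const_right _ 1 tendsto_natCast_atTop_atTop
      simpa using tendsto_const_nhds.sub h0
    have hliminf : ℓ ≤ liminf u atTop := by
      have := liminf_le_liminf (Filter.Eventually.of_forall hulb)
        (isBoundedUnder_of ⟨ℓ - 2, fun j => by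
          have h1 : (0:ℝ) < (j:ℝ) + 1 := by positivity
          have h2 : 2 / ((j:ℝ) + 1) ≤ 2 := by
            rw [div_le_iff₀ h1]; nlinarith [Nat.cast_nonneg (α := ℝ) j]
          linarith⟩)
        (hubddAbove.isCoboundedUnder_flip)
      rwa [hw.liminf_eq] at this
    calc ℓ ≤ liminf u atTop := hliminf
      _ ≤ limsup u atTop := liminf_le_limsup hubddAbove hubddBelow
      _ ≤ limsup v atTop := hsub
      _ ≤ G (astar, b) := hlimv
  -- conclude in EReal
  have hstep1 : limsup (fun n => ⨆ a : A, ⨅ b : B, (F n (a, b) : EReal)) atTop ≤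
      limsup (fun n => ((s' n : ℝ) : EReal)) atTop :=
    limsup_le_limsup (Filter.Eventually.of_forall hsle)
  have hstep2 : limsup (fun n => ((s' n : ℝ) : EReal)) atTop ≤ ((ℓ : ℝ) : EReal) := by
    by_contra hcon
    push_neg at hcon
    obtain ⟨c, hc1, hc2⟩ := EReal.exists_between_coe_real hcon
    have hev : ∀ᶠ n in atTop, s' n < c := by
      apply eventually_lt_of_limsup_lt _ hs'bddAbove
      exact_mod_cast hc1
    have : limsup (fun n => ((s' n : ℝ) : EReal)) atTop ≤ ((c : ℝ) : EReal) :=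
      limsup_le_of_le (by isBoundedDefault)
        (hev.mono fun n hn => by exact_mod_cast hn.le)
    exact absurd (this.trans_lt hc2) (lt_irrefl _)
  have hstep3 : ((ℓ : ℝ) : EReal) ≤ ⨆ a : A, ⨅ b : B, (G (a, b) : EReal) := by
    refine le_iSup_of_le astar (le_iInf fun b => ?_)
    exact_mod_cast hkey b
  exact hstep1.trans (hstep2.trans hstep3)
end

section
/- Let A and B be nonempty compact metric spaces, let (Fₙ)ₙ∈ℕ be a sequence of continuous functions Fₙ : A × B → ℝ that is uniformly bounded, and let F : A × B → ℝ be a function such that for every a ∈ A, every b ∈ B and every sequence (bₙ) in B with bₙ → b, liminf_{n→∞} Fₙ(a, bₙ) ≥ F(a, b). Then liminf_{n→∞} inf_{b∈B} sup_{a∈A} Fₙ(a, b) ≥ inf_{b∈B} sup_{a∈A} F(a, b). -/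
open Filter

/-- Abstract liminf interchange for min–max values: if `(Fₙ)` is a uniformly bounded
sequence of continuous functions on the product of nonempty compact metric spaces
`A × B` such that `liminfₙ Fₙ(a, bₙ) ≥ F(a, b)` whenever `bₙ → b`, then
`liminfₙ inf_b sup_a Fₙ(a,b) ≥ inf_b sup_a F(a,b)`. -/
theorem infSup_le_liminf_infSup
    {A B : Type*} [MetricSpace A] [CompactSpace A] [Nonempty A]
    [MetricSpace B] [CompactSpace B] [Nonempty B]
    (F : ℕ → A × B → ℝ) (hFc : ∀ n, Continuous (F n))
    (M : ℝ) (hFb : ∀ n p, |F n p| ≤ M)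
    (G : A × B → ℝ)
    (hlim : ∀ (a : A) (b : B) (bs : ℕ → B), Tendsto bs atTop (nhds b) →
      G (a, b) ≤ liminf (fun n => F n (a, bs n)) atTop) :
    (⨅ b : B, ⨆ a : A, (G (a, b) : EReal)) ≤
      liminf (fun n => ⨅ b : B, ⨆ a : A, (F n (a, b) : EReal)) atTop := by
  classical
  by_contra hcon
  push_neg at hcon
  obtain ⟨c, hc1, hc2⟩ := EReal.exists_between_coe_real hcon
  have hfreq : ∃ᶠ n in atTop,
      (⨅ b : B, ⨆ a : A, (F n (a, b) : EReal)) < (c : EReal) :=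
    frequently_lt_of_liminf_lt (by isBoundedDefault) hc1
  obtain ⟨φ, hφ, hφlt⟩ := Filter.extraction_of_frequently_atTop hfreq
  have hb : ∀ n, ∃ b : B, (⨆ a : A, (F (φ n) (a, b) : EReal)) < (c : EReal) :=
    fun n => iInf_lt_iff.mp (hφlt n)
  choose b hbc using hb
  obtain ⟨bstar, -, ψ, hψ, hbs⟩ :=
    isCompact_univ.tendsto_subseq (x := b) (fun n => Set.mem_univ (b n))
  set e : ℕ → ℕ := φ ∘ ψ with he_def
  have he : StrictMono e := hφ.comp hψ
  set bs : ℕ → B := fun m => if h : ∃ k, e k = m then b (ψ h.choose) else bstar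
    with hbs_def
  have hbse : ∀ k, bs (e k) = b (ψ k) := by
    intro k
    have h : ∃ k', e k' = e k := ⟨k, rfl⟩
    simp only [hbs_def, dif_pos h]
    exact congrArg (fun j => b (ψ j)) (he.injective h.choose_spec)
  have hbstend : Tendsto bs atTop (nhds bstar) := by
    rw [Metric.tendsto_atTop]
    intro ε hε
    obtain ⟨K, hK⟩ := (Metric.tendsto_atTop.mp hbs) ε hε
    refine ⟨e K, fun m hm => ?_⟩
    by_cases h : ∃ k, e k = m
    · have hk : e h.choose = m := h.choose_spec
      have : K ≤ h.choose := by
        have := hk ▸ hm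
        exact (he.le_iff_le).mp this
      simp only [hbs_def, dif_pos h]
      exact hK _ this
    · simp only [hbs_def, dif_neg h]
      simpa using hε
  -- key bound
  have key : ∀ a : A, G (a, bstar) ≤ c := by
    intro a
    have h1 := hlim a bstar bs hbstend
    have h2 : liminf (fun n => F n (a, bs n)) atTop ≤ c := by
      apply liminf_le_of_frequently_le
      · refine frequently_atTop.mpr fun N => ⟨e N, he.le_apply, ?_⟩
        rw [hbse]
        have hsup := hbc (ψ N)
        have hle : (F (φ (ψ N)) (a, b (ψ N)) : EReal) < (c : EReal) :=
          lt_of_le_of_lt (le_iSup (fun a' => (F (φ (ψ N)) (a', b (ψ N)) : EReal)) a) hsup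
        exact le_of_lt (EReal.coe_lt_coe_iff.mp hle)
      · exact isBoundedUnder_of ⟨-M, fun n => (abs_le.mp (hFb n _)).1⟩
    exact h1.trans h2
  have hfin : (⨅ b : B, ⨆ a : A, (G (a, b) : EReal)) ≤ (c : EReal) := by
    refine (iInf_le _ bstar).trans (iSup_le fun a => ?_)
    exact_mod_cast key a
  exact absurd (hfin.trans_lt hc2) (lt_irrefl _)
end
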